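/- Assume d is bounded with θ ≤ 2, so that d_E is a metric on E. Then d_E is a complete metric on E if and only if d is a complete metric on X. Likewise, if θ ≤ 1, then d_Em is a complete metric on E if and only if d is complete. -/

import Mathlib

/-- `ρ` is a metric: zero iff equal, symmetric, triangle inequality. -/
def IsMetric {α : Type*} (ρ : α → α → ℝ) : Prop :=
  (∀ x y, ρ x y = 0 ↔ x = y) ∧ (∀ x y, ρ x y = ρ y x) ∧
    ∀ x y z, ρ x z ≤ ρ x y + ρ y z

def IsCauchyWith {α : Type*} (ρ : α → α → ℝ) (S : ℕ → α) : Prop :=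
  ∀ ε : ℝ, 0 < ε → ∃ N : ℕ, ∀ m ≥ N, ∀ n ≥ N, ρ (S m) (S n) < ε

def TendsToWith {α : Type*} (ρ : α → α → ℝ) (S : ℕ → α) (l : α) : Prop :=
  ∀ ε : ℝ, 0 < ε → ∃ N : ℕ, ∀ n ≥ N, ρ (S n) l < ε

def IsCompleteWith {α : Type*} (ρ : α → α → ℝ) : Prop :=
  ∀ S : ℕ → α, IsCauchyWith ρ S → ∃ l, TendsToWith ρ S l

/-- the topology generated by the open balls of `ρ` -/
def topOf {α : Type*} (ρ : α → α → ℝ) : TopologicalSpace α :=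
  TopologicalSpace.generateFrom {s | ∃ (x : α) (ε : ℝ), s = {y | ρ x y < ε}}

/-- `sup d`, the supremum of all distances in `X` -/
noncomputable def supD (X : Type*) [MetricSpace X] : ℝ :=
  sSup {r : ℝ | ∃ x y : X, dist x y = r}

/-- The multiset distance `d_E`: enumerate `a` and `c` with multiplicity in all possible
orders; the shorter enumeration is matched against an initial part of the other, taking
the sum of the distances of matched pairs plus the notional part `M * |C(c) - C(a)|`;
`d_E` is the least such value. -/
noncomputable def dE {X : Type*} [MetricSpace X] (M : ℝ) (a c : Multiset X) : ℝ :=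
  sInf {r : ℝ | ∃ la lc : List X, (la : Multiset X) = a ∧ (lc : Multiset X) = c ∧
    r = (List.zipWith dist la lc).sum + M * |(c.card : ℝ) - (a.card : ℝ)|}

/-- `d_Em`, the mean version of `d_E` (equal to `0` on the pair of empty multisets). -/
noncomputable def dEm {X : Type*} [MetricSpace X] (M : ℝ) (a c : Multiset X) : ℝ :=
  dE M a c / (max a.card c.card : ℕ)


open List

section aux
variable {X : Type*} [MetricSpace X] {M : ℝ}

lemma zs_nonneg (la lc : List X) : 0 ≤ (List.zipWith dist la lc).sum := by
  induction la generalizing lc with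
  | nil => simp
  | cons a la ih =>
    cases lc with
    | nil => simp
    | cons c lc => simpa using add_nonneg dist_nonneg (ih lc)

lemma dE_set_nonempty (a c : Multiset X) :
    {r : ℝ | ∃ la lc : List X, (la : Multiset X) = a ∧ (lc : Multiset X) = c ∧
      r = (List.zipWith dist la lc).sum + M * |(c.card : ℝ) - (a.card : ℝ)|}.Nonempty :=
  ⟨_, a.toList, c.toList, a.coe_toList, c.coe_toList, rfl⟩

lemma dE_set_lb (hM : 0 < M) (a c : Multiset X) :
    ∀ r ∈ {r : ℝ | ∃ la lc : List X, (la : Multiset X) = a ∧ (lc : Multiset X) = c ∧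
      r = (List.zipWith dist la lc).sum + M * |(c.card : ℝ) - (a.card : ℝ)|},
      M * |(c.card : ℝ) - (a.card : ℝ)| ≤ r := by
  rintro r ⟨la, lc, _, _, rfl⟩
  nlinarith [zs_nonneg la lc]

lemma dE_ge (hM : 0 < M) (a c : Multiset X) :
    M * |(c.card : ℝ) - (a.card : ℝ)| ≤ dE M a c :=
  le_csInf (dE_set_nonempty a c) (dE_set_lb hM a c)

lemma dE_bddBelow (hM : 0 < M) (a c : Multiset X) :
    BddBelow {r : ℝ | ∃ la lc : List X, (la : Multiset X) = a ∧ (lc : Multiset X) = c ∧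
      r = (List.zipWith dist la lc).sum + M * |(c.card : ℝ) - (a.card : ℝ)|} :=
  ⟨_, dE_set_lb hM a c⟩

lemma dE_nonneg (hM : 0 < M) (a c : Multiset X) : 0 ≤ dE M a c :=
  le_trans (by positivity) (dE_ge hM a c)

lemma dE_le (hM : 0 < M) {a c : Multiset X} {la lc : List X}
    (ha : (la : Multiset X) = a) (hc : (lc : Multiset X) = c) :
    dE M a c ≤ (List.zipWith dist la lc).sum + M * |(c.card : ℝ) - (a.card : ℝ)| :=
  csInf_le (dE_bddBelow hM a c) ⟨la, lc, ha, hc, rfl⟩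

lemma dE_le_zs (hM : 0 < M) {a c : Multiset X} {la lc : List X}
    (ha : (la : Multiset X) = a) (hc : (lc : Multiset X) = c) (hcard : a.card = c.card) :
    dE M a c ≤ (List.zipWith dist la lc).sum := by
  have := dE_le hM ha hc (M := M)
  rw [hcard] at this
  simpa using this

/-- extraction of an almost optimal matching -/
lemma dE_extract (hM : 0 < M) {a c : Multiset X} (hcard : a.card = c.card) {ε : ℝ}
    (h : dE M a c < ε) :
    ∃ la lc : List X, (la : Multiset X) = a ∧ (lc : Multiset X) = c ∧
      (List.zipWith dist la lc).sum < ε := by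
  obtain ⟨r, ⟨la, lc, ha, hc, rfl⟩, hr⟩ :=
    (csInf_lt_iff (dE_bddBelow hM a c) (dE_set_nonempty a c)).mp h
  refine ⟨la, lc, ha, hc, ?_⟩
  rw [hcard] at hr
  simpa using hr

/-- lift a permutation of the first components of a list of pairs -/
lemma perm_lift_fst : ∀ (l : List (X × X)) (la' : List X), la' ~ l.map Prod.fst →
    ∃ l', l' ~ l ∧ l'.map Prod.fst = la' := by
  classical
  intro l la'
  induction la' generalizing l with
  | nil =>
    intro h
    have : l.map Prod.fst = [] := (h.symm).eq_nil
    exact ⟨[], by simp [List.map_eq_nil_iff.mp this], rfl⟩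
  | cons x xs ih =>
    intro h
    have hx : x ∈ l.map Prod.fst := h.mem_iff.mp (by simp)
    obtain ⟨p, hp, hpx⟩ := List.mem_map.mp hx
    obtain ⟨s, t, rfl⟩ := List.append_of_mem hp
    have hperm : s ++ p :: t ~ p :: (s ++ t) := List.perm_middle
    have h2 : x :: xs ~ x :: (s ++ t).map Prod.fst := by
      calc x :: xs ~ (s ++ p :: t).map Prod.fst := h
        _ ~ (p :: (s ++ t)).map Prod.fst := hperm.map Prod.fst
        _ = x :: (s ++ t).map Prod.fst := by simp [hpx]
    obtain ⟨l'', hl'', hmap⟩ := ih (s ++ t) h2.cons_inv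
    exact ⟨p :: l'', (hl''.cons p).trans hperm.symm, by simp [hmap, hpx]⟩

lemma zipWith_map_self (f : X → X → ℝ) : ∀ (l : List (X × X)),
    List.zipWith f (l.map Prod.fst) (l.map Prod.snd) = l.map (fun p => f p.1 p.2) := by
  intro l
  induction l with
  | nil => rfl
  | cons p l ih => simp [ih]

/-- reorder the second list along a permutation of the first -/
lemma reorder_matching {la lc la' : List X} (hlen : la.length = lc.length)
    (hperm : la' ~ la) :
    ∃ lc' : List X, (lc' : Multiset X) = (lc : Multiset X) ∧
      (List.zipWith dist la' lc').sum = (List.zipWith dist la lc).sum := by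
  set l := la.zip lc with hl
  have hfst : l.map Prod.fst = la := List.map_fst_zip hlen.le
  have hsnd : l.map Prod.snd = lc := List.map_snd_zip hlen.ge
  obtain ⟨l', hl'perm, hl'fst⟩ := perm_lift_fst l la' (hfst ▸ hperm)
  refine ⟨l'.map Prod.snd, ?_, ?_⟩
  · rw [Multiset.coe_eq_coe, ← hsnd]
    exact hl'perm.map Prod.snd
  · rw [← hl'fst, ← hfst, ← hsnd, zipWith_map_self, zipWith_map_self]
    exact (hl'perm.map _).sum_eq

end aux

section aux2
variable {X : Type*} [MetricSpace X] {M : ℝ}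

lemma length_eq_card {a : Multiset X} {la : List X} (h : (la : Multiset X) = a) :
    la.length = a.card := by rw [← h]; simp

/-- matching with prescribed first list -/
lemma dE_extract_fixed (hM : 0 < M) {a c : Multiset X} (hcard : a.card = c.card)
    {L : List X} (hL : (L : Multiset X) = a) {ε : ℝ} (h : dE M a c < ε) :
    ∃ lc : List X, (lc : Multiset X) = c ∧ (List.zipWith dist L lc).sum < ε := by
  obtain ⟨la, lc, ha, hc, hsum⟩ := dE_extract hM hcard h
  have hlen : la.length = lc.length := by
    rw [length_eq_card ha, length_eq_card hc, hcard]
  have hperm : L ~ la := Multiset.coe_eq_coe.mp (hL.trans ha.symm)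
  obtain ⟨lc', hlc', hsum'⟩ := reorder_matching hlen hperm
  exact ⟨lc', hlc'.trans hc, hsum' ▸ hsum⟩

lemma zs_triangle : ∀ (la lb lc : List X), la.length = lb.length → lb.length = lc.length →
    (List.zipWith dist la lc).sum ≤
      (List.zipWith dist la lb).sum + (List.zipWith dist lb lc).sum := by
  intro la
  induction la with
  | nil => intro lb lc h1 h2; simpa using zs_nonneg lb lc
  | cons a la ih =>
    intro lb lc h1 h2
    cases lb with
    | nil => simp at h1
    | cons b lb =>
      cases lc with
      | nil => simp at h2
      | cons c lc =>
        simp only [List.zipWith_cons_cons, List.sum_cons]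
        have := ih lb lc (by simpa using h1) (by simpa using h2)
        have htri := dist_triangle a b c
        linarith

/-- triangle inequality for `dE` among multisets of equal cardinality -/
lemma dE_triangle_eq (hM : 0 < M) {a b c : Multiset X}
    (hab : a.card = b.card) (hbc : b.card = c.card) :
    dE M a c ≤ dE M a b + dE M b c := by
  refine le_of_forall_pos_le_add ?_
  intro δ hδ
  obtain ⟨la, lb, ha, hb, hab'⟩ := dE_extract hM hab
    (lt_add_of_pos_right _ (half_pos hδ) : dE M a b < dE M a b + δ/2)
  obtain ⟨lc, hc, hbc'⟩ := dE_extract_fixed hM hbc hb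
    (lt_add_of_pos_right _ (half_pos hδ) : dE M b c < dE M b c + δ/2)
  have hl1 : la.length = lb.length := by
    rw [length_eq_card ha, length_eq_card hb, hab]
  have hl2 : lb.length = lc.length := by
    rw [length_eq_card hb, length_eq_card hc, hbc]
  have := dE_le_zs hM ha hc (hab.trans hbc)
  have := zs_triangle la lb lc hl1 hl2
  linarith

lemma dE_singleton (hM : 0 < M) (x y : X) : dE M {x} {y} = dist x y := by
  have hset : {r : ℝ | ∃ la lc : List X, (la : Multiset X) = ({x} : Multiset X) ∧
      (lc : Multiset X) = ({y} : Multiset X) ∧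
      r = (List.zipWith dist la lc).sum +
        M * |((({y} : Multiset X)).card : ℝ) - ((({x} : Multiset X)).card : ℝ)|}
      = {dist x y} := by
    ext r
    simp only [Set.mem_setOf_eq, Set.mem_singleton_iff]
    constructor
    · rintro ⟨la, lc, ha, hc, rfl⟩
      have ha' : la = [x] := by
        rw [← Multiset.coe_singleton, Multiset.coe_eq_coe] at ha
        exact List.perm_singleton.mp ha
      have hc' : lc = [y] := by
        rw [← Multiset.coe_singleton, Multiset.coe_eq_coe] at hc
        exact List.perm_singleton.mp hc
      subst ha' hc'
      simp
    · rintro rfl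
      exact ⟨[x], [y], by simp, by simp, by simp⟩
  rw [dE, hset, csInf_singleton]

end aux2

section aux3
variable {X : Type*} [MetricSpace X] {M : ℝ}

lemma zs_get_le : ∀ (la lc : List X) (i : ℕ) (h1 : i < la.length) (h2 : i < lc.length),
    dist (la[i]) (lc[i]) ≤ (List.zipWith dist la lc).sum := by
  intro la
  induction la with
  | nil => intro lc i h1 h2; simp at h1
  | cons a la ih =>
    intro lc i h1 h2
    cases lc with
    | nil => simp at h2
    | cons c lc =>
      cases i with
      | zero =>
        simp only [List.getElem_cons_zero, List.zipWith_cons_cons, List.sum_cons]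
        linarith [zs_nonneg la lc]
      | succ i =>
        simp only [List.getElem_cons_succ, List.zipWith_cons_cons, List.sum_cons]
        exact le_add_of_nonneg_of_le dist_nonneg
          (ih lc i (by simpa using h1) (by simpa using h2))

lemma zs_le_mul (b : ℝ) : ∀ (la lc : List X), la.length = lc.length →
    (∀ (i : ℕ) (h1 : i < la.length) (h2 : i < lc.length), dist (la[i]) (lc[i]) ≤ b) →
    (List.zipWith dist la lc).sum ≤ la.length * b := by
  intro la
  induction la with
  | nil => intro lc _ _; simp
  | cons a la ih =>
    intro lc hlen hb
    cases lc with
    | nil => simp at hlen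
    | cons c lc =>
      simp only [List.zipWith_cons_cons, List.sum_cons, List.length_cons]
      have h0 : dist a c ≤ b := hb 0 (by simp) (by simp)
      have := ih lc (by simpa using hlen)
        (fun i h1 h2 => by exact hb (i+1) (by simpa using h1) (by simpa using h2))
      push_cast
      nlinarith

/-- Core lemma: a `dE`-Cauchy sequence of multisets all of cardinality `k`
converges if `X` is complete. -/
lemma dE_core [CompleteSpace X] (hM : 0 < M)
    (S : ℕ → Multiset X) (k : ℕ) (hcard : ∀ n, (S n).card = k)
    (hC : ∀ ε : ℝ, 0 < ε → ∃ N, ∀ m ≥ N, ∀ n ≥ N, dE M (S m) (S n) < ε) :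
    ∃ l : Multiset X, l.card = k ∧
      ∀ ε : ℝ, 0 < ε → ∃ N, ∀ n ≥ N, dE M (S n) l < ε := by
  rcases Nat.eq_zero_or_pos k with hk | hk
  · -- trivial case k = 0
    subst hk
    refine ⟨0, by simp, fun ε hε => ⟨0, fun n _ => ?_⟩⟩
    have : S n = 0 := Multiset.card_eq_zero.mp (hcard n)
    rw [this]
    have h1 : dE M (0 : Multiset X) 0 ≤ 0 := by
      have := dE_le hM (a := (0 : Multiset X)) (c := (0 : Multiset X))
        (la := []) (lc := []) (by simp) (by simp)
      simpa using this
    linarith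
  -- choose witnesses of Cauchy-ness for ε = (1/2)^j
  have hpow : ∀ j : ℕ, (0:ℝ) < (1/2)^j := fun j => by positivity
  set Nf : ℕ → ℕ := fun j => (hC ((1/2)^j) (hpow j)).choose with hNf
  have hNfspec : ∀ j, ∀ m ≥ Nf j, ∀ n ≥ Nf j, dE M (S m) (S n) < (1/2)^j :=
    fun j => (hC ((1/2)^j) (hpow j)).choose_spec
  -- a rapidly Cauchy subsequence
  set ψ : ℕ → ℕ := fun n => Nat.rec (Nf 0) (fun n p => max (p+1) (Nf (n+1))) n with hψ
  have hψsucc : ∀ n, ψ (n+1) = max (ψ n + 1) (Nf (n+1)) := fun n => rfl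
  have hψNf : ∀ n, Nf n ≤ ψ n := by
    intro n; cases n with
    | zero => exact le_refl _
    | succ n => rw [hψsucc]; exact le_max_right _ _
  have hψmono : ∀ n, ψ n < ψ (n+1) := by
    intro n; rw [hψsucc]; exact lt_of_lt_of_le (Nat.lt_succ_self _) (le_max_left _ _)
  have hψge : ∀ n, n ≤ ψ n := by
    intro n
    induction n with
    | zero => exact Nat.zero_le _
    | succ n ih => exact Nat.lt_of_le_of_lt ih (hψmono n)
  have hdE : ∀ n, dE M (S (ψ n)) (S (ψ (n+1))) < (1/2)^n := by
    intro n
    exact hNfspec n (ψ n) (hψNf n) (ψ (n+1)) (le_trans (hψNf n) (le_of_lt (hψmono n)))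
  -- build compatible enumerations
  have key : ∀ (n : ℕ) (L : List X), (L : Multiset X) = S (ψ n) →
      ∃ lc : List X, (lc : Multiset X) = S (ψ (n+1)) ∧
        (List.zipWith dist L lc).sum < (1/2)^n := by
    intro n L hL
    exact dE_extract_fixed hM (by rw [hcard, hcard]) hL (hdE n)
  set F : ∀ n : ℕ, {l : List X // (l : Multiset X) = S (ψ n)} :=
    fun n => Nat.rec ⟨(S (ψ 0)).toList, Multiset.coe_toList _⟩
      (fun n p => ⟨(key n p.1 p.2).choose, (key n p.1 p.2).choose_spec.1⟩) n with hF
  set L : ℕ → List X := fun n => (F n).1 with hLdef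
  have hLcoe : ∀ n, ((L n : List X) : Multiset X) = S (ψ n) := fun n => (F n).2
  have hzs : ∀ n, (List.zipWith dist (L n) (L (n+1))).sum < (1/2)^n := by
    intro n
    exact (key n (F n).1 (F n).2).choose_spec.2
  have hlen : ∀ n, (L n).length = k := fun n => by
    rw [length_eq_card (hLcoe n), hcard]
  -- coordinate sequences
  set coord : Fin k → ℕ → X :=
    fun i n => (L n)[(i : ℕ)]'(lt_of_lt_of_eq i.2 (hlen n).symm) with hcoord
  have hcoordCauchy : ∀ i : Fin k, CauchySeq (coord i) := by
    intro i
    apply cauchySeq_of_le_geometric (r := 1/2) (C := 1) (by norm_num)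
    intro n
    rw [one_mul]
    refine le_trans ?_ (le_of_lt (hzs n))
    exact zs_get_le (L n) (L (n+1)) i (lt_of_lt_of_eq i.2 (hlen n).symm)
      (lt_of_lt_of_eq i.2 (hlen (n+1)).symm)
  have hcoordLim : ∀ i : Fin k, ∃ y : X, Filter.Tendsto (coord i) Filter.atTop (nhds y) :=
    fun i => cauchySeq_tendsto_of_complete (hcoordCauchy i)
  choose y hy using hcoordLim
  set Y : List X := List.ofFn y with hY
  have hYlen : Y.length = k := by simp [hY]
  refine ⟨(Y : Multiset X), by simp [hY], ?_⟩
  -- the subsequence converges to Y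
  have hsub : ∀ ε : ℝ, 0 < ε → ∃ N, ∀ n ≥ N, dE M (S (ψ n)) (Y : Multiset X) ≤ ε := by
    intro ε hε
    have hεk : 0 < ε / k := by positivity
    have hev : ∀ᶠ n in Filter.atTop, ∀ i : Fin k, dist (coord i n) (y i) < ε / k :=
      Filter.eventually_all.mpr
        (fun i => Filter.eventually_atTop.mpr (Metric.tendsto_atTop.mp (hy i) (ε/k) hεk))
    obtain ⟨N, hN⟩ := Filter.eventually_atTop.mp hev
    refine ⟨N, fun n hn => ?_⟩
    have hzsY : (List.zipWith dist (L n) Y).sum ≤ ε := by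
      have := zs_le_mul (ε/k) (L n) Y (by rw [hlen, hYlen]) ?_
      · rw [hlen] at this
        calc (List.zipWith dist (L n) Y).sum ≤ k * (ε / k) := this
          _ = ε := by field_simp
      · intro i h1 h2
        have hik : i < k := by rw [← hlen n]; exact h1
        have hYi : Y[i] = y ⟨i, hik⟩ := by
          simp [hY]
        rw [hYi]
        exact le_of_lt (hN n hn ⟨i, hik⟩)
    refine le_trans (dE_le_zs hM (hLcoe n) rfl ?_) hzsY
    rw [hcard]
    simp [hY]
  -- conclude for the whole sequence
  intro ε hε
  obtain ⟨N₁, hN₁⟩ := hC (ε/4) (by positivity)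
  obtain ⟨N₂, hN₂⟩ := hsub (ε/4) (by positivity)
  refine ⟨N₁, fun n hn => ?_⟩
  set n₀ := max N₁ N₂ with hn₀
  have hψn₀ : N₁ ≤ ψ n₀ := le_trans (le_max_left _ _) (hψge n₀)
  have htri : dE M (S n) (Y : Multiset X) ≤
      dE M (S n) (S (ψ n₀)) + dE M (S (ψ n₀)) (Y : Multiset X) :=
    dE_triangle_eq hM (by rw [hcard, hcard]) (by rw [hcard]; simp [hY])
  have h1 : dE M (S n) (S (ψ n₀)) < ε/4 := hN₁ n hn (ψ n₀) hψn₀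
  have h2 : dE M (S (ψ n₀)) (Y : Multiset X) ≤ ε/4 := hN₂ n₀ (le_max_right _ _)
  linarith

end aux3

section aux4
variable {X : Type*} [MetricSpace X] {M : ℝ}

lemma dE_zero (hM : 0 < M) : dE M (0 : Multiset X) 0 = 0 := by
  have h1 : dE M (0 : Multiset X) 0 ≤ 0 := by
    have := dE_le hM (a := (0 : Multiset X)) (c := (0 : Multiset X))
      (la := []) (lc := []) (by simp) (by simp)
    simpa using this
  linarith [dE_nonneg hM (0 : Multiset X) 0]

lemma dEm_card_ge (hM : 0 < M) (a c : Multiset X) :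
    M * |(c.card : ℝ) - (a.card : ℝ)| ≤ dEm M a c * (max a.card c.card : ℕ) := by
  rcases Nat.eq_zero_or_pos (max a.card c.card) with h | h
  · have ha : a.card = 0 := Nat.le_zero.mp (le_trans (le_max_left _ _) h.le)
    have hc : c.card = 0 := Nat.le_zero.mp (le_trans (le_max_right _ _) h.le)
    simp [ha, hc]
  · have hne : ((max a.card c.card : ℕ) : ℝ) ≠ 0 := by positivity
    rw [dEm, div_mul_cancel₀ _ hne]
    exact dE_ge hM a c

lemma dEm_eq (a c : Multiset X) (h : 0 < max a.card c.card) :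
    dE M a c = dEm M a c * (max a.card c.card : ℕ) := by
  have hne : ((max a.card c.card : ℕ) : ℝ) ≠ 0 := by positivity
  rw [dEm, div_mul_cancel₀ _ hne]

lemma dEm_singleton (hM : 0 < M) (x y : X) : dEm M {x} {y} = dist x y := by
  rw [dEm, dE_singleton hM]
  simp

/-- generic: completeness of a multiset-distance yields completeness of `X` -/
lemma generic_back {ρ : Multiset X → Multiset X → ℝ} {δ : ℝ} (hδ : 0 < δ)
    (hsingle : ∀ x y : X, ρ {x} {y} = dist x y)
    (hcard1 : ∀ (x : X) (l : Multiset X), ρ {x} l < δ → l.card = 1)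
    (hcomp : ∀ S : ℕ → Multiset X,
      (∀ ε : ℝ, 0 < ε → ∃ N, ∀ m ≥ N, ∀ n ≥ N, ρ (S m) (S n) < ε) →
      ∃ l, ∀ ε : ℝ, 0 < ε → ∃ N, ∀ n ≥ N, ρ (S n) l < ε) :
    CompleteSpace X := by
  apply Metric.complete_of_cauchySeq_tendsto
  intro u hu
  obtain ⟨l, hl⟩ := hcomp (fun n => {u n}) (by
    intro ε hε
    obtain ⟨N, hN⟩ := Metric.cauchySeq_iff.mp hu ε hε
    exact ⟨N, fun m hm n hn => by rw [hsingle]; exact hN m hm n hn⟩)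
  obtain ⟨N₀, hN₀⟩ := hl δ hδ
  have hc : l.card = 1 := hcard1 (u N₀) l (hN₀ N₀ le_rfl)
  obtain ⟨y, rfl⟩ := Multiset.card_eq_one.mp hc
  refine ⟨y, Metric.tendsto_atTop.mpr ?_⟩
  intro ε hε
  obtain ⟨N, hN⟩ := hl ε hε
  exact ⟨N, fun n hn => by rw [← hsingle (u n) y]; exact hN n hn⟩

lemma dEm_nonneg (hM : 0 < M) (a c : Multiset X) : 0 ≤ dEm M a c :=
  div_nonneg (dE_nonneg hM a c) (by positivity)

lemma card_one_of_dE (hM : 0 < M) (x : X) (l : Multiset X) (h : dE M {x} l < M) :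
    l.card = 1 := by
  have h1 := dE_ge hM ({x} : Multiset X) l
  simp only [Multiset.card_singleton] at h1
  push_cast at h1
  have h2 : |(l.card : ℝ) - 1| < 1 := by nlinarith [abs_nonneg ((l.card : ℝ) - 1)]
  rw [abs_lt] at h2
  have h4 : 0 < l.card := by exact_mod_cast show (0:ℝ) < l.card by linarith
  have h5 : l.card < 2 := by exact_mod_cast show (l.card:ℝ) < 2 by linarith
  omega

lemma card_one_of_dEm (hM : 0 < M) (x : X) (l : Multiset X) (h : dEm M {x} l < M/2) :
    l.card = 1 := by
  have h1 := dEm_card_ge hM ({x} : Multiset X) l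
  simp only [Multiset.card_singleton] at h1
  push_cast at h1
  have hd0 : 0 ≤ dEm M {x} l := dEm_nonneg hM _ _
  set c := l.card with hc
  rcases Nat.lt_or_ge c 2 with h2 | h2
  · interval_cases c
    · exfalso
      norm_num at h1
      nlinarith
    · rfl
  · exfalso
    have hcr : (2:ℝ) ≤ (c:ℝ) := by exact_mod_cast h2
    have hm : (1:ℝ) ⊔ (c:ℝ) = (c:ℝ) := max_eq_right (by linarith)
    rw [hm] at h1
    have habs : |(c:ℝ) - 1| = (c:ℝ) - 1 := abs_of_nonneg (by linarith)
    rw [habs] at h1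
    nlinarith

end aux4

section aux5
variable {X : Type*} [MetricSpace X] {M : ℝ}

lemma card_eq_of_dE_lt (hM : 0 < M) {a c : Multiset X} (h : dE M a c < M) :
    a.card = c.card := by
  have h1 := dE_ge hM a c
  have h2 : |(c.card:ℝ) - (a.card:ℝ)| < 1 := by nlinarith [abs_nonneg ((c.card:ℝ) - a.card)]
  rw [abs_lt] at h2
  have h3 : (a.card:ℝ) < c.card + 1 := by linarith
  have h4 : (c.card:ℝ) < a.card + 1 := by linarith
  have h5 : a.card < c.card + 1 := by exact_mod_cast h3
  have h6 : c.card < a.card + 1 := by exact_mod_cast h4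
  omega

lemma dE_forward [CompleteSpace X] (hM : 0 < M) (S : ℕ → Multiset X)
    (hS : ∀ ε : ℝ, 0 < ε → ∃ N, ∀ m ≥ N, ∀ n ≥ N, dE M (S m) (S n) < ε) :
    ∃ l, ∀ ε : ℝ, 0 < ε → ∃ N, ∀ n ≥ N, dE M (S n) l < ε := by
  obtain ⟨N, hN⟩ := hS M hM
  set k := (S N).card with hk
  have hcard : ∀ n, (S (n + N)).card = k :=
    fun n => (card_eq_of_dE_lt hM (hN (n + N) (Nat.le_add_left _ _) N le_rfl)).symm ▸ rfl
  have hcard' : ∀ n, (S (n + N)).card = k := by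
    intro n
    exact (card_eq_of_dE_lt hM (hN (n + N) (Nat.le_add_left _ _) N le_rfl))
  obtain ⟨l, hlcard, hl⟩ := dE_core hM (fun n => S (n + N)) k hcard'
    (fun ε hε => by
      obtain ⟨N₂, h₂⟩ := hS ε hε
      exact ⟨N₂, fun m hm n hn => h₂ (m + N) (le_trans hm (Nat.le_add_right _ _))
        (n + N) (le_trans hn (Nat.le_add_right _ _))⟩)
  refine ⟨l, fun ε hε => ?_⟩
  obtain ⟨N₃, h₃⟩ := hl ε hε
  refine ⟨N₃ + N, fun n hn => ?_⟩
  have h4 : S ((n - N) + N) = S n := by congr 1; omega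
  have := h₃ (n - N) (by omega)
  rwa [h4] at this

lemma dEm_zero (hM : 0 < M) : dEm M (0 : Multiset X) 0 = 0 := by
  simp [dEm, dE_zero hM]

lemma dEm_forward [CompleteSpace X] (hM : 0 < M) (S : ℕ → Multiset X)
    (hS : ∀ ε : ℝ, 0 < ε → ∃ N, ∀ m ≥ N, ∀ n ≥ N, dEm M (S m) (S n) < ε) :
    ∃ l, ∀ ε : ℝ, 0 < ε → ∃ N, ∀ n ≥ N, dEm M (S n) l < ε := by
  obtain ⟨N₁, h₁⟩ := hS (M/2) (half_pos hM)
  set c₀ := (S N₁).card with hc₀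
  -- cards are bounded from N₁ on
  have hbd : ∀ n ≥ N₁, (S n).card ≤ 2 * c₀ := by
    intro n hn
    by_contra hgt
    push_neg at hgt
    have hd := h₁ N₁ le_rfl n hn
    have hg := dEm_card_ge hM (S N₁) (S n)
    have hmx : ((max c₀ (S n).card : ℕ) : ℝ) = ((S n).card : ℝ) := by
      have : max c₀ (S n).card = (S n).card := max_eq_right (by omega)
      rw [this]
    rw [hmx] at hg
    have hcn : (2 * c₀ : ℝ) < ((S n).card : ℝ) := by exact_mod_cast hgt
    have habs : |((S n).card : ℝ) - (c₀:ℝ)| = ((S n).card : ℝ) - c₀ :=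
      abs_of_nonneg (by have : (0:ℝ) ≤ (c₀:ℝ) := Nat.cast_nonneg _; linarith)
    rw [habs] at hg
    have hcnn : (0:ℝ) ≤ ((S n).card : ℝ) := Nat.cast_nonneg _
    nlinarith
  set K := 2 * c₀ + 1 with hK
  obtain ⟨N₂', h₂⟩ := hS (M / (2 * K)) (by positivity)
  set N₂ := max N₁ N₂' with hN₂
  have hconst : ∀ n ≥ N₂, (S n).card = (S N₂).card := by
    intro n hn
    have hN₂N₁ : N₁ ≤ N₂ := le_max_left _ _
    have hd := h₂ N₂ (le_max_right _ _) n (le_trans (le_max_right _ _) hn)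
    have hg := dEm_card_ge hM (S N₂) (S n)
    have hb1 : (S N₂).card ≤ 2 * c₀ := hbd N₂ hN₂N₁
    have hb2 : (S n).card ≤ 2 * c₀ := hbd n (le_trans hN₂N₁ hn)
    have hmaxle : ((max (S N₂).card (S n).card : ℕ) : ℝ) ≤ 2 * c₀ := by
      have : max (S N₂).card (S n).card ≤ 2 * c₀ := max_le hb1 hb2
      exact_mod_cast this
    have hmaxnn : (0:ℝ) ≤ ((max (S N₂).card (S n).card : ℕ) : ℝ) := Nat.cast_nonneg _
    have hKpos : (0:ℝ) < (K:ℝ) := by positivity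
    have hchain : M * |((S n).card : ℝ) - ((S N₂).card : ℝ)| ≤ M / (2*K) * (2*c₀) := by
      calc M * |((S n).card : ℝ) - ((S N₂).card : ℝ)|
          ≤ dEm M (S N₂) (S n) * ((max (S N₂).card (S n).card : ℕ) : ℝ) := hg
        _ ≤ M / (2*K) * ((max (S N₂).card (S n).card : ℕ) : ℝ) :=
            mul_le_mul_of_nonneg_right (le_of_lt hd) hmaxnn
        _ ≤ M / (2*K) * (2*c₀) := by
            apply mul_le_mul_of_nonneg_left hmaxle (by positivity)
    have hc2K : (2*c₀ : ℝ) < 2*K := by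
      have : (c₀:ℝ) ≥ 0 := Nat.cast_nonneg _
      simp only [hK]
      push_cast
      linarith
    have habs : |((S n).card : ℝ) - ((S N₂).card : ℝ)| < 1 := by
      have h5 : M / (2*K) * (2*c₀) < M := by
        rw [div_mul_eq_mul_div, mul_comm]
        rw [div_lt_iff₀ (by positivity)]
        nlinarith
      nlinarith [abs_nonneg (((S n).card : ℝ) - ((S N₂).card : ℝ))]
    rw [abs_lt] at habs
    have h3 : (S n).card < (S N₂).card + 1 := by
      exact_mod_cast show ((S n).card:ℝ) < (S N₂).card + 1 by linarith
    have h4 : (S N₂).card < (S n).card + 1 := by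
      exact_mod_cast show ((S N₂).card:ℝ) < (S n).card + 1 by linarith
    omega
  set k := (S N₂).card with hk
  rcases Nat.eq_zero_or_pos k with hk0 | hkpos
  · refine ⟨0, fun ε hε => ⟨N₂, fun n hn => ?_⟩⟩
    have : S n = 0 := Multiset.card_eq_zero.mp ((hconst n hn).trans hk0)
    rw [this, dEm_zero hM]
    exact hε
  · have hkR : (0:ℝ) < (k:ℝ) := by exact_mod_cast hkpos
    have hcard' : ∀ n, (S (n + N₂)).card = k := fun n => hconst (n + N₂) (Nat.le_add_left _ _)
    have hmaxk : ∀ m n : ℕ, ((max (S (m + N₂)).card (S (n + N₂)).card : ℕ) : ℝ) = (k:ℝ) := by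
      intro m n; rw [hcard', hcard', max_self]
    obtain ⟨l, hlcard, hl⟩ := dE_core hM (fun n => S (n + N₂)) k hcard'
      (fun ε hε => by
        obtain ⟨N₃, h₃⟩ := hS (ε / k) (by positivity)
        refine ⟨N₃, fun m hm n hn => ?_⟩
        have hd := h₃ (m + N₂) (le_trans hm (Nat.le_add_right _ _))
          (n + N₂) (le_trans hn (Nat.le_add_right _ _))
        have heq := dEm_eq (M := M) (S (m + N₂)) (S (n + N₂))
          (by rw [hcard', hcard', max_self]; exact hkpos)
        rw [heq, hmaxk]
        calc dEm M (S (m + N₂)) (S (n + N₂)) * (k:ℝ) < (ε / k) * k :=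
              mul_lt_mul_of_pos_right hd hkR
          _ = ε := by field_simp)
    refine ⟨l, fun ε hε => ?_⟩
    obtain ⟨N₄, h₄⟩ := hl (ε * k) (by positivity)
    refine ⟨N₄ + N₂, fun n hn => ?_⟩
    have h5 : S ((n - N₂) + N₂) = S n := by congr 1; omega
    have h6 := h₄ (n - N₂) (by omega)
    rw [h5] at h6
    have hcn : (S n).card = k := hconst n (by omega)
    have hmax : ((max (S n).card l.card : ℕ) : ℝ) = (k:ℝ) := by
      rw [hcn, hlcard, max_self]
    rw [dEm, hmax, div_lt_iff₀ hkR]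
    linarith

end aux5


/-- If `(sup d)/M ≤ 2` then `d_E` is a complete metric on `E` iff `d` is complete;
if `(sup d)/M ≤ 1` then `d_Em` is a complete metric on `E` iff `d` is complete. -/
theorem stmt_8 {X : Type*} [MetricSpace X] [Nontrivial X] (M : ℝ) (hM : 0 < M)
    (hbdd : ∃ B : ℝ, ∀ x y : X, dist x y ≤ B) :
    (supD X / M ≤ 2 → (IsCompleteWith (dE (X := X) M) ↔ CompleteSpace X)) ∧
    (supD X / M ≤ 1 → (IsCompleteWith (dEm (X := X) M) ↔ CompleteSpace X)) := by
  refine ⟨fun _ => ⟨fun hcomp => ?_, fun hX => ?_⟩, fun _ => ⟨fun hcomp => ?_, fun hX => ?_⟩⟩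
  · exact generic_back hM (dE_singleton hM) (fun x l h => card_one_of_dE hM x l h) hcomp
  · haveI := hX
    intro S hS
    exact dE_forward hM S hS
  · exact generic_back (half_pos hM) (dEm_singleton hM)
      (fun x l h => card_one_of_dEm hM x l h) hcomp
  · haveI := hX
    intro S hS
    exact dEm_forward hM S hS
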